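/- Let L be a binary subword-closed language and m a natural number such that neither the word 0^{m+1}·1·0^{m+1} nor the word 1^{m+1}·0·1^{m+1} belongs to L (i.e., Hom(L) ≤ m). Then every word w ∈ L can be written in the form w = w₁ · a^i · w₂ · ā^j · w₃, where a ∈ E, i, j are natural numbers (possibly zero), and w₁, w₂, w₃ are binary words each of length at most 2m. -/

import Mathlib

/-- Binary words over the alphabet `E = {0,1}`, encoded as lists of booleans. -/
abbrev Word := List Bool

/-- A binary language `L` is subword-closed if every subsequence (sublist) of a word
of `L` belongs to `L`. -/
def SubwordClosed (L : Set Word) : Prop :=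
  ∀ w ∈ L, ∀ u : Word, u.Sublist w → u ∈ L

/-- The word `a^m ā a^m`. -/
def homWord (m : ℕ) (a : Bool) : Word :=
  List.replicate m a ++ [!a] ++ List.replicate m a

/-- The word `a^m ā^m`. -/
def hetWord (m : ℕ) (a : Bool) : Word :=
  List.replicate m a ++ List.replicate m (!a)

/-- The set `L(n)` of words of `L` of length `n`. -/
def LangAt (L : Set Word) (n : ℕ) : Set Word := {w : Word | w ∈ L ∧ w.length = n}

/-- Counting both letters gives the length. -/
lemma count_add_count (l : Word) : l.count true + l.count false = l.length := by
  induction l with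
  | nil => simp
  | cons b t ih => cases b <;> simp [List.count_cons] <;> omega

/-- Mark the `(k+1)`-st occurrence of `a` in `w`. -/
lemma split_at_count (a : Bool) : ∀ (w : Word) (k : ℕ), k < w.count a →
    ∃ x y : Word, w = x ++ a :: y ∧ x.count a = k ∧ y.count a = w.count a - k - 1 := by
  intro w
  induction w with
  | nil => simp
  | cons b t ih =>
    intro k hk
    by_cases hb : b = a
    · subst hb
      cases k with
      | zero => exact ⟨[], t, rfl, by simp, by simp [List.count_cons]⟩
      | succ k' =>
        have hk' : k' < t.count b := by simp [List.count_cons] at hk; omega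
        obtain ⟨x, y, hxy, hx, hy⟩ := ih k' hk'
        refine ⟨b :: x, y, by simp [hxy], by simp [List.count_cons, hx], ?_⟩
        simp [List.count_cons, hy]
    · obtain ⟨x, y, hxy, hx, hy⟩ := ih k (by simpa [List.count_cons, hb] using hk)
      refine ⟨b :: x, y, by simp [hxy], by simp [List.count_cons, hx, hb], ?_⟩
      simp [List.count_cons, hb, hy]

lemma rep_mid (a : Bool) (L : ℕ) (q : List Bool) :
    a :: (List.replicate L a ++ a :: q) = List.replicate (L+2) a ++ q := by
  have h : List.replicate L a ++ a :: q = List.replicate (L+1) a ++ q := by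
    rw [List.replicate_succ']; simp
  rw [h, ← List.cons_append, ← List.replicate_succ]

/-- If `w` avoids `a^{m+1} ā a^{m+1}` then `w = x a^i y` with few `a`'s in `x` and `y`. -/
lemma run_lemma (m : ℕ) (a : Bool) (w : Word) (h : ¬ (homWord (m+1) a).Sublist w) :
    ∃ (x : Word) (i : ℕ) (y : Word), w = x ++ List.replicate i a ++ y ∧
      x.count a ≤ m ∧ y.count a ≤ m ∧ x.count a + i + y.count a = w.count a := by
  set z := w.count a with hz
  by_cases hzm : z ≤ m
  · exact ⟨w, 0, [], by simp, hzm, by simp, by simp [hz]⟩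
  by_cases hz2 : z ≤ 2 * m + 1
  · obtain ⟨x, y, hxy, hx, hy⟩ := split_at_count a w m (by omega)
    refine ⟨x, 1, y, by simpa using hxy, le_of_eq hx, by omega, by omega⟩
  · -- z ≥ 2m+2
    obtain ⟨x, y₀, hxy, hx, hy₀⟩ := split_at_count a w m (by omega)
    have hy₀c : y₀.count a = z - m - 1 := hy₀
    obtain ⟨p, q, hpq, hp, hq⟩ := split_at_count a y₀ (z - 2*m - 2) (by omega)
    have hqc : q.count a = m := by omega
    -- p contains no !a
    have hpall : ∀ b ∈ p, b = a := by
      intro b hb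
      by_contra hba
      have hba' : b = !a := by revert hba; cases a <;> cases b <;> simp
      subst hba'
      obtain ⟨p₁, p₂, hp12⟩ := List.append_of_mem hb
      apply h
      have h1 : (List.replicate (m+1) a).Sublist (x ++ [a] ++ p₁) := by
        rw [List.replicate_sublist_iff]
        simp only [List.count_append, hx, List.count_cons, List.count_singleton]
        simp
      have h2 : (List.replicate (m+1) a).Sublist (p₂ ++ a :: q) := by
        rw [List.replicate_sublist_iff]
        simp only [List.count_append, List.count_cons, hqc]
        simp
      have h3 : ((!a) :: List.replicate (m+1) a).Sublist ((!a) :: (p₂ ++ a :: q)) :=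
        h2.cons₂ _
      have h4 : (List.replicate (m+1) a ++ ((!a) :: List.replicate (m+1) a)).Sublist
          ((x ++ [a] ++ p₁) ++ ((!a) :: (p₂ ++ a :: q))) := h1.append h3
      have hweq : w = (x ++ [a] ++ p₁) ++ ((!a) :: (p₂ ++ a :: q)) := by
        rw [hxy, hpq, hp12]; simp
      rw [hweq]
      simpa [homWord] using h4
    have hplen : p = List.replicate p.length a :=
      List.eq_replicate_iff.mpr ⟨rfl, hpall⟩
    have hpcount : p.count a = p.length := by
      conv_lhs => rw [hplen]; simp
    refine ⟨x, p.length + 2, q, ?_, le_of_eq hx, le_of_eq hqc, by omega⟩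
    rw [hxy, hpq]
    conv_lhs => rw [hplen]
    rw [rep_mid, ← List.append_assoc]

/-- Split a word of length `≤ 2k` into two halves of length `≤ k`. -/
lemma split_half (w : Word) (k : ℕ) (h : w.length ≤ 2 * k) :
    ∃ x y : Word, w = x ++ y ∧ x.length ≤ k ∧ y.length ≤ k := by
  refine ⟨w.take k, w.drop k, (w.take_append_drop k).symm, ?_, ?_⟩
  · simp
  · simp; omega

/-- **Lemma 1.** If `L` is a binary subword-closed language such that neither
`0^{m+1} 1 0^{m+1}` nor `1^{m+1} 0 1^{m+1}` belongs to `L` (i.e. `Hom(L) ≤ m`),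
then every word of `L` can be written as `w₁ a^i w₂ ā^j w₃` with `a ∈ E`,
`i, j ∈ ω`, and `|w₁|, |w₂|, |w₃| ≤ 2m`. -/
theorem subword_closed_decomposition (L : Set Word) (hL : SubwordClosed L) (m : ℕ)
    (h0 : homWord (m + 1) false ∉ L) (h1 : homWord (m + 1) true ∉ L) :
    ∀ w ∈ L, ∃ (a : Bool) (i j : ℕ) (w₁ w₂ w₃ : Word),
      w = w₁ ++ List.replicate i a ++ w₂ ++ List.replicate j (!a) ++ w₃ ∧
      w₁.length ≤ 2 * m ∧ w₂.length ≤ 2 * m ∧ w₃.length ≤ 2 * m := by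
  intro w hw
  have h0' : ¬ (homWord (m+1) false).Sublist w := fun hs => h0 (hL w hw _ hs)
  have h1' : ¬ (homWord (m+1) true).Sublist w := fun hs => h1 (hL w hw _ hs)
  obtain ⟨x, i, y, hw_eq, hx0, hy0, hsum0⟩ := run_lemma m false w h0'
  by_cases hxt : x.count true ≤ m
  · -- Case A : the prefix `x` has few `true`s; decompose `y`'s true-run
    have hy_sub : y.Sublist w := by rw [hw_eq]; exact List.sublist_append_right _ _
    obtain ⟨u, J, v, hy_eq, hu1, hv1, _⟩ :=
      run_lemma m true y (fun hs => h1' (hs.trans hy_sub))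
    have hcu : u.count false + v.count false ≤ m := by
      have hyc : y.count false = u.count false + v.count false := by
        rw [hy_eq]; simp [List.count_append, List.count_replicate]
      omega
    refine ⟨false, i, J, x, u, v, ?_, ?_, ?_, ?_⟩
    · rw [hw_eq, hy_eq]; simp
    · have := count_add_count x; omega
    · have := count_add_count u; omega
    · have := count_add_count v; omega
  by_cases hyt : y.count true ≤ m
  · -- Case B : the suffix `y` has few `true`s; decompose `x`'s true-run
    have hx_sub : x.Sublist w := by
      rw [hw_eq]
      exact (List.sublist_append_left _ _).trans (List.sublist_append_left _ _)
    obtain ⟨u, J, v, hx_eq, hu1, hv1, _⟩ :=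
      run_lemma m true x (fun hs => h1' (hs.trans hx_sub))
    have hcu : u.count false + v.count false ≤ m := by
      have hxc : x.count false = u.count false + v.count false := by
        rw [hx_eq]; simp [List.count_append, List.count_replicate]
      omega
    refine ⟨true, J, i, u, v, y, ?_, ?_, ?_, ?_⟩
    · rw [hw_eq, hx_eq]; simp
    · have := count_add_count u; omega
    · have := count_add_count v; omega
    · have := count_add_count y; omega
  · -- Case C : both `x` and `y` have many `true`s
    push_neg at hxt hyt
    by_cases hi : 1 ≤ i
    · -- impossible: we would find `1^{m+1} 0 1^{m+1}` in `w`
      exfalso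
      apply h1'
      have s1 : (List.replicate (m+1) true).Sublist x := by
        rw [List.replicate_sublist_iff]; omega
      have s2 : ([false] : Word).Sublist (List.replicate i false) := by
        have : ([false] : Word) = List.replicate 1 false := by simp
        rw [this, List.replicate_sublist_iff]
        simpa using hi
      have s3 : (List.replicate (m+1) true).Sublist y := by
        rw [List.replicate_sublist_iff]; omega
      have := (s1.append s2).append s3
      rw [hw_eq]
      simpa [homWord] using this
    · -- i = 0, so `w` has at most `2m` `false`s
      have hi0 : i = 0 := by omega
      have hwf : w.count false ≤ 2 * m := by omega
      obtain ⟨u, J, v, hq_eq, hu1, hv1, _⟩ := run_lemma m true w h1'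
      have hcf : u.count false + v.count false ≤ 2 * m := by
        have : w.count false = u.count false + v.count false := by
          rw [hq_eq]; simp [List.count_append, List.count_replicate]
        omega
      by_cases hcu : u.count false ≤ m
      · -- `u` is short, split `v` in half
        have hvlen : v.length ≤ 2 * (2 * m) := by
          have := count_add_count v; omega
        obtain ⟨v₁, v₂, hv_eq, hl1, hl2⟩ := split_half v (2 * m) hvlen
        refine ⟨true, J, 0, u, v₁, v₂, ?_, ?_, hl1, hl2⟩
        · rw [hq_eq, hv_eq]; simp
        · have := count_add_count u; omega
      · -- `v` is short, split `u` in half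
        have hcv : v.count false ≤ m := by omega
        have hulen : u.length ≤ 2 * (2 * m) := by
          have := count_add_count u; omega
        obtain ⟨u₁, u₂, hu_eq, hl1, hl2⟩ := split_half u (2 * m) hulen
        refine ⟨false, 0, J, u₁, u₂, v, ?_, hl1, hl2, ?_⟩
        · rw [hq_eq, hu_eq]; simp
        · have := count_add_count v; omega
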